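/- Let α ∈ (0,1), c > 0 and λ ∈ ℝ. For z₁, z₂ > 0 define u(z₁,z₂) = ∑_{k=0}^∞ (λ/(2^α c^α))^{2k} (z₁ z₂)^{αk+α-1} / Γ(αk+α)². Then (4c²)^α · D^α_{z₁}(D^α_{z₂} u)(z₁,z₂) = λ² u(z₁,z₂) for all z₁, z₂ > 0, where D^α_{z_i} denotes the Riemann–Liouville fractional derivative of order α acting in the variable z_i. -/

import Mathlib

open Real MeasureTheory

/-- Riemann–Liouville fractional derivative of order `a ∈ (0,1)`:
`D^a f (z) = (d/dz)[(1/Γ(1-a)) ∫_0^z (z-u)^{-a} f(u) du]`. -/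
noncomputable def RL (a : ℝ) (f : ℝ → ℝ) (z : ℝ) : ℝ :=
  deriv (fun x => (1 / Real.Gamma (1 - a)) * ∫ u in (0:ℝ)..x, (x - u) ^ (-a) * f u) z

open Filter intervalIntegral

lemma gamma_lb (x : ℝ) (hx : 0 < x) : (1/6 : ℝ) ≤ Real.Gamma x := by
  have mono := Real.Gamma_strictMonoOn_Ici.monotoneOn
  have key : ∀ y : ℝ, 2 ≤ y → (1:ℝ) ≤ Real.Gamma y := by
    intro y hy
    have := mono (Set.mem_Ici.mpr le_rfl) (Set.mem_Ici.mpr hy) hy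
    rwa [Real.Gamma_two] at this
  rcases le_or_gt 2 x with h | h
  · linarith [key x h]
  · have hx1 : x ≠ 0 := hx.ne'
    have h1 : Real.Gamma (x + 1) = x * Real.Gamma x := Real.Gamma_add_one hx1
    have h2 : Real.Gamma (x + 1 + 1) = (x+1) * Real.Gamma (x+1) :=
      Real.Gamma_add_one (by positivity)
    have h3 : (1:ℝ) ≤ Real.Gamma (x + 1 + 1) := key _ (by linarith)
    have hg : 0 < Real.Gamma x := Real.Gamma_pos_of_pos hx
    have h4 : 1 ≤ (x+1)*(x*Real.Gamma x) := by rw [← h1, ← h2]; exact h3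
    nlinarith [h4, mul_pos hx hg, hg]

lemma inv_gamma_le (x : ℝ) (hx : 0 < x) : 1 / Real.Gamma x ≤ 6 := by
  have h := gamma_lb x hx
  have hg : 0 < Real.Gamma x := Real.Gamma_pos_of_pos hx
  rw [div_le_iff₀ hg]; linarith

lemma pow_le_const_mul_factorial (t : ℝ) : ∃ C : ℝ, 0 < C ∧ ∀ n : ℕ, t ^ n ≤ C * ((n.factorial : ℕ) : ℝ) := by
  have hs := Real.summable_pow_div_factorial t
  have hb : BddAbove (Set.range fun n : ℕ => t ^ n / (n.factorial)) :=
    hs.tendsto_atTop_zero.bddAbove_range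
  obtain ⟨C, hC⟩ := hb
  refine ⟨max C 1, by positivity, fun n => ?_⟩
  have h1 : t ^ n / (n.factorial) ≤ C := hC (Set.mem_range_self n)
  have h2 : (0:ℝ) < (n.factorial) := by positivity
  have := (div_le_iff₀ h2).mp h1
  calc t ^ n ≤ C * ((n.factorial : ℕ) : ℝ) := this
    _ ≤ max C 1 * ((n.factorial : ℕ) : ℝ) := by
        apply mul_le_mul_of_nonneg_right (le_max_left _ _) h2.le

lemma summable_geom_div_gamma (a b R : ℝ) (ha : 0 < a) (hb : 0 < b) (hR : 0 ≤ R) :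
    Summable (fun k : ℕ => R ^ k / Real.Gamma (a * k + b)) := by
  set s : ℝ := max 2 (2 * R) with hs
  have hs2 : (2:ℝ) ≤ s := le_max_left _ _
  have hsR : 2 * R ≤ s := le_max_right _ _
  have hs0 : (0:ℝ) < s := by linarith
  have hs1 : (1:ℝ) ≤ s := by linarith
  obtain ⟨C, hC0, hC⟩ := pow_le_const_mul_factorial (s ^ (2/a))
  have ht1 : (1:ℝ) ≤ s ^ (2/a) := by
    calc (1:ℝ) = s ^ (0:ℝ) := (Real.rpow_zero s).symm
      _ ≤ s ^ (2/a) := Real.rpow_le_rpow_of_exponent_le hs1 (by positivity)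
  -- eventual bound
  have hev : ∀ᶠ k : ℕ in atTop, R ^ k / Real.Gamma (a * k + b) ≤ (1/2) ^ k := by
    have htend : Tendsto (fun k : ℕ => s ^ ((k:ℝ) - 4/a)) atTop atTop := by
      have h1 : Tendsto (fun k : ℕ => (k:ℝ) - 4/a) atTop atTop :=
        tendsto_atTop_add_const_right _ _ tendsto_natCast_atTop_atTop
      have h2 : Tendsto (fun x : ℝ => s ^ x) atTop atTop := by
        have hlog : 0 < Real.log s := Real.log_pos (by linarith)
        have : Tendsto (fun x : ℝ => Real.exp (Real.log s * x)) atTop atTop :=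
          Real.tendsto_exp_atTop.comp (Tendsto.const_mul_atTop hlog tendsto_id)
        refine this.congr (fun x => ?_)
        rw [Real.rpow_def_of_pos hs0, mul_comm]
      exact h2.comp h1
    have hev1 : ∀ᶠ k : ℕ in atTop, C ≤ s ^ ((k:ℝ) - 4/a) := htend.eventually_ge_atTop C
    have hev2 : ∀ᶠ k : ℕ in atTop, (2:ℝ) ≤ a * k := by
      have : Tendsto (fun k : ℕ => a * (k:ℝ)) atTop atTop :=
        (tendsto_natCast_atTop_atTop (R := ℝ)).const_mul_atTop ha
      exact this.eventually_ge_atTop 2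
    filter_upwards [hev1, hev2] with k hk1 hk2
    -- main estimate
    have hx2 : (2:ℝ) ≤ a * k + b := by linarith
    set m : ℕ := Nat.floor (a * k + b) with hm
    have hm2 : 2 ≤ m := Nat.le_floor (by exact_mod_cast hx2)
    have hmle : (m:ℝ) ≤ a * k + b := Nat.floor_le (by linarith)
    have hmgt : a * k + b < m + 1 := Nat.lt_floor_add_one _
    have h1m : 1 ≤ m := le_trans (by norm_num) hm2
    have hcast : ((m - 1 : ℕ) : ℝ) = (m:ℝ) - 1 := by
      push_cast [Nat.cast_sub h1m]
      ring
    -- Gamma lower bound chain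
    have hGm : Real.Gamma m ≤ Real.Gamma (a * k + b) := by
      apply Real.Gamma_strictMonoOn_Ici.monotoneOn _ _ hmle
      · exact Set.mem_Ici.mpr (by exact_mod_cast hm2)
      · exact Set.mem_Ici.mpr hx2
    have hGfact : Real.Gamma m = ((m-1).factorial : ℝ) := by
      have : ((m:ℝ)) = ((m-1:ℕ):ℝ) + 1 := by rw [hcast]; ring
      rw [this, Real.Gamma_nat_eq_factorial]
    have hfac : (s ^ (2/a)) ^ (m-1) ≤ C * ((m-1).factorial : ℝ) := hC (m-1)
    have hrw : (s ^ (2/a)) ^ (m-1) = s ^ ((2/a) * ((m-1:ℕ):ℝ)) := by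
      rw [← Real.rpow_natCast (s ^ (2/a)) (m-1), ← Real.rpow_mul hs0.le]
    have hexp : (2:ℝ) * k - 4/a ≤ (2/a) * ((m-1:ℕ):ℝ) := by
      rw [hcast]
      have : a * k + b - 2 ≤ (m:ℝ) - 1 := by linarith
      have h2a : 0 < 2/a := by positivity
      calc (2:ℝ) * k - 4/a = (2/a) * (a * k - 2) := by field_simp; ring
        _ ≤ (2/a) * ((m:ℝ) - 1) := by
            apply mul_le_mul_of_nonneg_left _ h2a.le
            linarith
    have hchain : s ^ ((2:ℝ) * k - 4/a) ≤ C * ((m-1).factorial : ℝ) := by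
      calc s ^ ((2:ℝ) * k - 4/a) ≤ s ^ ((2/a) * ((m-1:ℕ):ℝ)) :=
            Real.rpow_le_rpow_of_exponent_le hs1 hexp
        _ = (s ^ (2/a)) ^ (m-1) := hrw.symm
        _ ≤ C * ((m-1).factorial : ℝ) := hfac
    have hsplit : s ^ ((2:ℝ) * k - 4/a) = s ^ (k:ℕ) * s ^ ((k:ℝ) - 4/a) := by
      rw [← Real.rpow_natCast s k, ← Real.rpow_add hs0]
      congr 1; ring
    have hskpos : (0:ℝ) < s ^ (k:ℕ) := by positivity
    have hGbig : s ^ (k:ℕ) ≤ Real.Gamma (a * k + b) := by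
      have h5 : s ^ (k:ℕ) * C ≤ s ^ ((2:ℝ) * k - 4/a) := by
        rw [hsplit]
        exact mul_le_mul_of_nonneg_left hk1 hskpos.le
      have h6 : s ^ (k:ℕ) * C ≤ C * ((m-1).factorial : ℝ) := h5.trans hchain
      have h7 : s ^ (k:ℕ) ≤ ((m-1).factorial : ℝ) := by
        have := le_of_mul_le_mul_right (by linarith [h6] : s ^ (k:ℕ) * C ≤ ((m-1).factorial : ℝ) * C) hC0
        exact this
      calc s ^ (k:ℕ) ≤ ((m-1).factorial : ℝ) := h7
        _ = Real.Gamma m := hGfact.symm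
        _ ≤ Real.Gamma (a*k+b) := hGm
    calc R ^ k / Real.Gamma (a * k + b) ≤ R ^ k / s ^ k :=
          div_le_div_of_nonneg_left (by positivity) hskpos hGbig
      _ = (R / s) ^ k := by rw [div_pow]
      _ ≤ (1/2) ^ k := by
          apply pow_le_pow_left₀ (by positivity)
          rw [div_le_div_iff₀ hs0 (by norm_num)]; linarith
  -- conclude summability
  obtain ⟨N, hN⟩ := eventually_atTop.mp hev
  rw [← summable_nat_add_iff N]
  apply Summable.of_nonneg_of_le (fun k => by positivity)
    (fun k => ?_) (summable_geometric_of_lt_one (by norm_num) (by norm_num : (1/2:ℝ) < 1))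
  have hb1 := hN (k+N) (Nat.le_add_left N k)
  have hb2 : (1/2:ℝ) ^ (k+N) ≤ (1/2:ℝ) ^ k :=
    pow_le_pow_of_le_one (by norm_num) (by norm_num) (Nat.le_add_right k N)
  exact hb1.trans hb2

lemma betaInt_integrable (a b z : ℝ) (ha : 0 < a) (ha1 : a < 1) (hb : 0 < b) (hz : 0 < z) :
    IntervalIntegrable (fun t => (z - t) ^ (-a) * t ^ (b-1)) volume 0 z := by
  have hmeas : AEStronglyMeasurable (fun t : ℝ => (z - t) ^ (-a) * t ^ (b-1)) volume := by
    apply Measurable.aestronglyMeasurable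
    have m1 : Measurable fun t : ℝ => z - t := measurable_const.sub measurable_id
    measurability
  rw [intervalIntegrable_iff_integrableOn_Ioc_of_le hz.le]
  have hsplit : Set.Ioc (0:ℝ) z = Set.Ioc 0 (z/2) ∪ Set.Ioc (z/2) z := by
    rw [Set.Ioc_union_Ioc_eq_Ioc] <;> linarith
  rw [hsplit]
  apply MeasureTheory.IntegrableOn.union
  · -- near 0 : bound by (z/2)^(-a) * t^(b-1)
    have hint : IntegrableOn (fun t : ℝ => (z/2) ^ (-a) * t ^ (b-1)) (Set.Ioc 0 (z/2)) volume := by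
      have := (intervalIntegral.intervalIntegrable_rpow' (a := 0) (b := z/2) (r := b-1) (by linarith)).const_mul ((z/2) ^ (-a))
      rwa [intervalIntegrable_iff_integrableOn_Ioc_of_le (by linarith)] at this
    apply Integrable.mono' hint hmeas.restrict
    filter_upwards [ae_restrict_mem measurableSet_Ioc] with t ht
    rw [Real.norm_eq_abs, abs_mul]
    have h1 : 0 < z - t := by rcases ht with ⟨h1', h2'⟩; linarith
    rw [abs_of_nonneg (Real.rpow_nonneg h1.le _), abs_of_nonneg (Real.rpow_nonneg ht.1.le _)]
    apply mul_le_mul_of_nonneg_right _ (Real.rpow_nonneg ht.1.le _)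
    apply Real.rpow_le_rpow_of_nonpos (by linarith) (by rcases ht with ⟨h1', h2'⟩; linarith) (by linarith)
  · -- near z : bound by ((z/2)^(b-1) + z^(b-1)) * (z-t)^(-a)
    have hint : IntegrableOn (fun t : ℝ => ((z/2)^(b-1) + z^(b-1)) * (z - t) ^ (-a)) (Set.Ioc (z/2) z) volume := by
      have h0 : IntervalIntegrable (fun s : ℝ => s ^ (-a)) volume 0 (z/2) :=
        intervalIntegral.intervalIntegrable_rpow' (by linarith)
      have h1 : IntervalIntegrable (fun t : ℝ => (z - t) ^ (-a)) volume (z - z/2) (z - 0) := by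
        have h2 := h0.comp_sub_left z
        simpa using h2.symm
      have h3 : IntervalIntegrable (fun t : ℝ => (z - t) ^ (-a)) volume (z/2) z := by
        have : z - z/2 = z/2 := by ring
        rw [this] at h1; simpa using h1
      have := h3.const_mul ((z/2)^(b-1) + z^(b-1))
      rwa [intervalIntegrable_iff_integrableOn_Ioc_of_le (by linarith)] at this
    apply Integrable.mono' hint hmeas.restrict
    filter_upwards [ae_restrict_mem measurableSet_Ioc] with t ht
    rw [Real.norm_eq_abs, abs_mul]
    have h1 : 0 ≤ z - t := by rcases ht with ⟨h1', h2'⟩; linarith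
    have ht0 : 0 < t := lt_trans (by linarith) ht.1
    rw [abs_of_nonneg (Real.rpow_nonneg h1 _), abs_of_nonneg (Real.rpow_nonneg ht0.le _), mul_comm]
    apply mul_le_mul_of_nonneg_right _ (Real.rpow_nonneg h1 _)
    rcases le_or_gt 1 b with hb1 | hb1
    · have : t ^ (b-1) ≤ z ^ (b-1) :=
        Real.rpow_le_rpow ht0.le (by rcases ht with ⟨h1', h2'⟩; linarith) (by linarith)
      have hpos : (0:ℝ) ≤ (z/2)^(b-1) := Real.rpow_nonneg (by linarith) _
      linarith
    · have : t ^ (b-1) ≤ (z/2) ^ (b-1) :=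
        Real.rpow_le_rpow_of_nonpos (by linarith) (le_of_lt ht.1) (by linarith)
      have hpos : (0:ℝ) ≤ z^(b-1) := Real.rpow_nonneg (by linarith) _
      linarith

lemma betaInt_value (a b z : ℝ) (ha : 0 < a) (ha1 : a < 1) (hb : 0 < b) (hz : 0 < z) :
    ∫ t in (0:ℝ)..z, (z - t) ^ (-a) * t ^ (b-1)
      = Real.Gamma b * Real.Gamma (1-a) / Real.Gamma (b+1-a) * z ^ (b-a) := by
  have key : ((∫ t in (0:ℝ)..z, (z - t) ^ (-a) * t ^ (b-1) : ℝ) : ℂ)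
      = ∫ t in (0:ℝ)..z, (t:ℂ) ^ ((b:ℂ) - 1) * ((z:ℂ) - t) ^ ((((1:ℂ)-a)) - 1) := by
    rw [← intervalIntegral.integral_ofReal]
    apply intervalIntegral.integral_congr
    intro t ht
    rw [Set.uIcc_of_le hz.le] at ht
    have ht0 : 0 ≤ t := ht.1
    have htz : 0 ≤ z - t := by have := ht.2; linarith
    dsimp only
    rw [show ((1:ℂ) - (a:ℂ) - 1) = ((-a : ℝ):ℂ) by push_cast; ring,
        show ((b:ℂ) - 1) = ((b-1 : ℝ):ℂ) by push_cast; ring,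
        Complex.ofReal_mul, Complex.ofReal_cpow htz, Complex.ofReal_cpow ht0]
    push_cast
    ring
  have hsc := Complex.betaIntegral_scaled (b:ℂ) ((1:ℂ) - a) hz
  rw [hsc] at key
  have hbeta : Complex.betaIntegral (b:ℂ) ((1:ℂ)-a)
      = (Real.Gamma b * Real.Gamma (1-a) / Real.Gamma (b+1-a) : ℝ) := by
    have hG := Complex.Gamma_mul_Gamma_eq_betaIntegral
      (s := (b:ℂ)) (t := (1:ℂ)-a) (by simpa using hb) (by simp; linarith)
    have harg : (b:ℂ) + ((1:ℂ) - a) = ((b + 1 - a : ℝ) : ℂ) := by push_cast; ring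
    have hGb : Complex.Gamma (b:ℂ) = (Real.Gamma b : ℝ) := Complex.Gamma_ofReal b
    have hGa : Complex.Gamma ((1:ℂ) - a) = (Real.Gamma (1-a) : ℝ) := by
      rw [show ((1:ℂ) - a) = ((1 - a : ℝ) : ℂ) by push_cast; ring]
      exact Complex.Gamma_ofReal _
    have hGba : Complex.Gamma ((b:ℂ) + ((1:ℂ) - a)) = (Real.Gamma (b+1-a) : ℝ) := by
      rw [harg]; exact Complex.Gamma_ofReal _
    have hne : (Real.Gamma (b+1-a) : ℂ) ≠ 0 := by
      simp only [ne_eq, Complex.ofReal_eq_zero]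
      exact (Real.Gamma_pos_of_pos (by linarith)).ne'
    rw [hGb, hGa, hGba] at hG
    push_cast
    rw [eq_div_iff hne]
    linear_combination -hG
  have hzc : ((z:ℂ)) ^ ((b:ℂ) + ((1:ℂ)-a) - 1) = ((z ^ (b - a) : ℝ) : ℂ) := by
    rw [show ((b:ℂ) + ((1:ℂ)-a) - 1) = ((b - a : ℝ) : ℂ) by push_cast; ring]
    rw [Complex.ofReal_cpow hz.le]
  rw [hbeta, hzc] at key
  have : ((∫ t in (0:ℝ)..z, (z - t) ^ (-a) * t ^ (b-1) : ℝ) : ℂ)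
      = ((z ^ (b-a) * (Real.Gamma b * Real.Gamma (1-a) / Real.Gamma (b+1-a)) : ℝ) : ℂ) := by
    rw [key]; push_cast; ring
  have := Complex.ofReal_inj.mp this
  rw [this]; ring

lemma RL_series (a : ℝ) (ha : 0 < a) (ha1 : a < 1) (C : ℕ → ℝ) (f : ℝ → ℝ)
    (hf : ∀ t : ℝ, 0 < t → f t = ∑' k : ℕ, C k * t ^ (a * (k:ℝ) + a - 1))
    (hsum : ∀ r : ℝ, 0 < r → Summable (fun k : ℕ => |C k| * Real.Gamma (a * (k:ℝ) + a) * r ^ k))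
    (z : ℝ) (hz : 0 < z) :
    RL a f z = ∑' k : ℕ, C k * (Real.Gamma (a * (k:ℝ) + a) / Real.Gamma (a * (k:ℝ))) * z ^ (a * (k:ℝ) - 1) := by
  have hG1a : 0 < Real.Gamma (1 - a) := Real.Gamma_pos_of_pos (by linarith)
  have hbk : ∀ k : ℕ, (0:ℝ) < a * (k:ℝ) + a := by
    intro k; have : (0:ℝ) ≤ (k:ℝ) := Nat.cast_nonneg k; nlinarith
  have hak1 : ∀ k : ℕ, (0:ℝ) < a * (k:ℝ) + 1 := by
    intro k; have : (0:ℝ) ≤ (k:ℝ) := Nat.cast_nonneg k; nlinarith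
  have haknn : ∀ k : ℕ, (0:ℝ) ≤ a * (k:ℝ) := by
    intro k; have : (0:ℝ) ≤ (k:ℝ) := Nat.cast_nonneg k; nlinarith
  have hGpos : ∀ k : ℕ, 0 < Real.Gamma (a * (k:ℝ) + a) := fun k => Real.Gamma_pos_of_pos (hbk k)
  have hGpos1 : ∀ k : ℕ, 0 < Real.Gamma (a * (k:ℝ) + 1) := fun k => Real.Gamma_pos_of_pos (hak1 k)
  set D : ℕ → ℝ := fun k => C k * (Real.Gamma (a * (k:ℝ) + a) / Real.Gamma (a * (k:ℝ) + 1)) with hD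
  have hDabs : ∀ k, |D k| = |C k| * (Real.Gamma (a * (k:ℝ) + a) / Real.Gamma (a * (k:ℝ) + 1)) := by
    intro k
    rw [hD]; dsimp only
    rw [abs_mul, abs_of_nonneg (div_nonneg (hGpos k).le (hGpos1 k).le)]
  have hDsum : ∀ r : ℝ, 0 < r → Summable (fun k : ℕ => |D k| * r ^ k) := by
    intro r hr
    apply Summable.of_nonneg_of_le
      (fun k => mul_nonneg (abs_nonneg _) (pow_nonneg hr.le k)) (fun k => ?_)
      (((hsum r hr).mul_left 6))
    rw [hDabs k]
    have h2 : Real.Gamma (a * (k:ℝ) + a) / Real.Gamma (a * (k:ℝ) + 1)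
        ≤ Real.Gamma (a * (k:ℝ) + a) * 6 := by
      rw [div_eq_mul_one_div]
      exact mul_le_mul_of_nonneg_left (inv_gamma_le _ (hak1 k)) (hGpos k).le
    calc |C k| * (Real.Gamma (a * (k:ℝ) + a) / Real.Gamma (a * (k:ℝ) + 1)) * r ^ k
        ≤ |C k| * (Real.Gamma (a * (k:ℝ) + a) * 6) * r ^ k := by
          apply mul_le_mul_of_nonneg_right _ (pow_nonneg hr.le k)
          exact mul_le_mul_of_nonneg_left h2 (abs_nonneg _)
      _ = 6 * (|C k| * Real.Gamma (a * (k:ℝ) + a) * r ^ k) := by ring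
  -- Step A
  have hF : ∀ x : ℝ, 0 < x →
      (1 / Real.Gamma (1 - a)) * ∫ t in (0:ℝ)..x, (x - t) ^ (-a) * f t
        = ∑' k : ℕ, D k * x ^ (a * (k:ℝ)) := by
    intro x hx
    have hxa : (0:ℝ) < x ^ a := Real.rpow_pos_of_pos hx a
    set G : ℕ → ℝ → ℝ := fun k t => (x - t) ^ (-a) * t ^ (a * (k:ℝ) + a - 1) with hGdef
    set F : ℕ → ℝ → ℝ := fun k t => C k * G k t with hFdef
    have hGint : ∀ k, IntegrableOn (G k) (Set.Ioc 0 x) volume := by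
      intro k
      have := betaInt_integrable a (a * (k:ℝ) + a) x ha ha1 (hbk k) hx
      rwa [intervalIntegrable_iff_integrableOn_Ioc_of_le hx.le] at this
    have hGval : ∀ k, ∫ t in Set.Ioc 0 x, G k t
        = Real.Gamma (a * (k:ℝ) + a) * Real.Gamma (1-a) / Real.Gamma (a * (k:ℝ) + 1) * x ^ (a * (k:ℝ)) := by
      intro k
      have h1 := betaInt_value a (a * (k:ℝ) + a) x ha ha1 (hbk k) hx
      rw [intervalIntegral.integral_of_le hx.le] at h1
      have e1 : a * (k:ℝ) + a + 1 - a = a * (k:ℝ) + 1 := by ring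
      have e2 : a * (k:ℝ) + a - a = a * (k:ℝ) := by ring
      rw [e1, e2] at h1
      exact h1
    have hGnonneg : ∀ k, ∀ t ∈ Set.Ioc (0:ℝ) x, 0 ≤ G k t := by
      intro k t ht
      have h1 : (0:ℝ) ≤ x - t := by have := ht.2; linarith
      exact mul_nonneg (Real.rpow_nonneg h1 _) (Real.rpow_nonneg ht.1.le _)
    have hFint : ∀ k, IntegrableOn (F k) (Set.Ioc 0 x) volume := fun k => (hGint k).const_mul _
    have hFnormval : ∀ k, (∫ t in Set.Ioc 0 x, ‖F k t‖)
        = |C k| * (Real.Gamma (a * (k:ℝ) + a) * Real.Gamma (1-a) / Real.Gamma (a * (k:ℝ) + 1) * x ^ (a * (k:ℝ))) := by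
      intro k
      rw [← hGval k, ← MeasureTheory.integral_const_mul]
      apply MeasureTheory.setIntegral_congr_fun measurableSet_Ioc
      intro t ht
      show ‖F k t‖ = |C k| * G k t
      rw [hFdef]; dsimp only
      rw [Real.norm_eq_abs, abs_mul, abs_of_nonneg (hGnonneg k t ht)]
    have hnormsum : Summable (fun k => ∫ t in Set.Ioc 0 x, ‖F k t‖) := by
      rw [funext hFnormval]
      apply Summable.of_nonneg_of_le (fun k => ?_) (fun k => ?_)
        (((hsum (x ^ a) hxa).mul_left (6 * Real.Gamma (1-a))))
      · exact mul_nonneg (abs_nonneg _) (mul_nonneg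
          (div_nonneg (mul_nonneg (hGpos k).le hG1a.le) (hGpos1 k).le)
          (Real.rpow_nonneg hx.le _))
      · have h6 : 1 / Real.Gamma (a * (k:ℝ) + 1) ≤ 6 := inv_gamma_le _ (hak1 k)
        have hxak : x ^ (a * (k:ℝ)) = (x ^ a) ^ k := by
          rw [Real.rpow_mul hx.le, Real.rpow_natCast]
        rw [hxak]
        have hxk : (0:ℝ) ≤ (x ^ a) ^ k := pow_nonneg hxa.le k
        calc |C k| * (Real.Gamma (a * (k:ℝ) + a) * Real.Gamma (1-a) / Real.Gamma (a * (k:ℝ) + 1) * (x ^ a) ^ k)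
            = (|C k| * Real.Gamma (a * (k:ℝ) + a) * (x ^ a) ^ k) * (Real.Gamma (1-a) * (1 / Real.Gamma (a * (k:ℝ) + 1))) := by ring
          _ ≤ (|C k| * Real.Gamma (a * (k:ℝ) + a) * (x ^ a) ^ k) * (Real.Gamma (1-a) * 6) := by
              apply mul_le_mul_of_nonneg_left _
                (mul_nonneg (mul_nonneg (abs_nonneg _) (hGpos k).le) hxk)
              exact mul_le_mul_of_nonneg_left h6 hG1a.le
          _ = 6 * Real.Gamma (1-a) * (|C k| * Real.Gamma (a * (k:ℝ) + a) * (x ^ a) ^ k) := by ring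
    have hswap : ∫ t in Set.Ioc 0 x, (∑' k, F k t) = ∑' k, ∫ t in Set.Ioc 0 x, F k t :=
      (MeasureTheory.integral_tsum_of_summable_integral_norm hFint hnormsum).symm
    have hcongr : ∫ t in (0:ℝ)..x, (x - t) ^ (-a) * f t = ∫ t in Set.Ioc 0 x, (∑' k, F k t) := by
      rw [intervalIntegral.integral_of_le hx.le]
      apply MeasureTheory.setIntegral_congr_fun measurableSet_Ioc
      intro t ht
      show (x - t) ^ (-a) * f t = ∑' k, F k t
      rw [hf t ht.1, ← tsum_mul_left]
      apply tsum_congr; intro k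
      rw [hFdef, hGdef]; dsimp only; ring
    rw [hcongr, hswap, ← tsum_mul_left]
    apply tsum_congr; intro k
    have h7 : ∫ t in Set.Ioc 0 x, F k t = C k * ∫ t in Set.Ioc 0 x, G k t :=
      MeasureTheory.integral_const_mul _ _
    rw [h7, hGval k, hD]
    dsimp only
    field_simp
  -- Step B
  set M : ℝ := max 1 (z * 2) with hM
  have hM1 : (1:ℝ) ≤ M := le_max_left _ _
  have hMz : z * 2 ≤ M := le_max_right _ _
  have hM0 : (0:ℝ) < M := by linarith
  have hMa : (0:ℝ) < M ^ a := Real.rpow_pos_of_pos hM0 a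
  set g : ℕ → ℝ → ℝ := fun k y => D k * y ^ (a * (k:ℝ)) with hg
  set g' : ℕ → ℝ → ℝ := fun k y => D k * ((a * (k:ℝ)) * y ^ (a * (k:ℝ) - 1)) with hg'
  set uu : ℕ → ℝ := fun k => |D k| * ((a * (k:ℝ)) * M ^ (a * (k:ℝ)) * (2/z)) with huu
  have huusum : Summable uu := by
    apply Summable.of_nonneg_of_le (fun k => ?_) (fun k => ?_)
      ((hDsum (2 * M ^ a) (by linarith)).mul_left (a * (2/z)))
    · rw [huu]; dsimp only
      exact mul_nonneg (abs_nonneg _) (mul_nonneg (mul_nonneg (haknn k)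
        (Real.rpow_nonneg hM0.le _)) (by positivity))
    · rw [huu]; dsimp only
      have hk2 : (k:ℝ) ≤ (2:ℝ) ^ k := by exact_mod_cast (Nat.lt_two_pow_self (n := k)).le
      have hMak : M ^ (a * (k:ℝ)) = (M ^ a) ^ k := by
        rw [Real.rpow_mul hM0.le, Real.rpow_natCast]
      rw [hMak]
      calc |D k| * (a * (k:ℝ) * (M ^ a) ^ k * (2/z))
          ≤ |D k| * (a * (2:ℝ) ^ k * (M ^ a) ^ k * (2/z)) := by
            apply mul_le_mul_of_nonneg_left _ (abs_nonneg _)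
            have h1 : a * (k:ℝ) ≤ a * (2:ℝ) ^ k := mul_le_mul_of_nonneg_left hk2 ha.le
            apply mul_le_mul_of_nonneg_right _ (by positivity)
            exact mul_le_mul_of_nonneg_right h1 (pow_nonneg hMa.le k)
        _ = a * (2/z) * (|D k| * (2 * M ^ a) ^ k) := by rw [mul_pow]; ring
  have hderiv : HasDerivAt (fun y => ∑' k, g k y) (∑' k, g' k z) z := by
    refine hasDerivAt_tsum_of_isPreconnected (y₀ := z) huusum
      (isOpen_Ioo (a := z/2) (b := z*2)) isPreconnected_Ioo
      (fun k y hy => ?hg) (fun k y hy => ?hb)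
      (Set.mem_Ioo.mpr ⟨by linarith, by linarith⟩)
      ?hs (Set.mem_Ioo.mpr ⟨by linarith, by linarith⟩)
    case hg =>
      have hy0 : (0:ℝ) < y := lt_trans (by linarith) hy.1
      have := (Real.hasDerivAt_rpow_const (p := a * (k:ℝ)) (Or.inl hy0.ne')).const_mul (D k)
      simpa [hg, hg'] using this
    case hb =>
      have hy0 : (0:ℝ) < y := lt_trans (by linarith) hy.1
      have hakk : (0:ℝ) ≤ a * (k:ℝ) := haknn k
      have h1 : y ^ (a * (k:ℝ) - 1) = y ^ (a * (k:ℝ)) * (1/y) := by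
        rw [Real.rpow_sub hy0, Real.rpow_one, div_eq_mul_inv, one_div]
      have h2 : y ^ (a * (k:ℝ)) ≤ M ^ (a * (k:ℝ)) :=
        Real.rpow_le_rpow hy0.le (by have := hy.2; linarith) hakk
      have h4 : 1 / y ≤ 2 / z := by
        rw [div_le_div_iff₀ hy0 hz]; linarith [hy.1]
      have h5 : y ^ (a * (k:ℝ) - 1) ≤ M ^ (a * (k:ℝ)) * (2/z) := by
        rw [h1]
        exact mul_le_mul h2 h4 (by positivity) (Real.rpow_nonneg hM0.le _)
      have key : ‖g' k y‖ ≤ uu k := by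
        rw [hg', huu]
        simp only [Real.norm_eq_abs]
        have e1 : |D k * (a * (k:ℝ) * y ^ (a * (k:ℝ) - 1))|
            = |D k| * (a * (k:ℝ) * y ^ (a * (k:ℝ) - 1)) := by
          rw [abs_mul, abs_of_nonneg (mul_nonneg hakk (Real.rpow_nonneg hy0.le _))]
        rw [e1]
        apply mul_le_mul_of_nonneg_left _ (abs_nonneg _)
        calc a * (k:ℝ) * y ^ (a * (k:ℝ) - 1) ≤ a * (k:ℝ) * (M ^ (a * (k:ℝ)) * (2/z)) :=
              mul_le_mul_of_nonneg_left h5 hakk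
          _ = a * (k:ℝ) * M ^ (a * (k:ℝ)) * (2/z) := by ring
      exact key
    case hs =>
      apply Summable.of_abs
      apply Summable.of_nonneg_of_le (fun k => abs_nonneg _) (fun k => ?_)
        (hDsum (z ^ a) (Real.rpow_pos_of_pos hz a))
      have hzak : z ^ (a * (k:ℝ)) = (z ^ a) ^ k := by
        rw [Real.rpow_mul hz.le, Real.rpow_natCast]
      have key : |g k z| ≤ |D k| * (z ^ a) ^ k := by
        rw [hg]
        simp only
        rw [abs_mul, hzak, abs_of_nonneg (pow_nonneg (Real.rpow_pos_of_pos hz a).le k)]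
      exact key
  -- Step C
  have hRLeq : RL a f z = ∑' k, g' k z := by
    rw [RL]
    have hee : (fun x => (1 / Real.Gamma (1 - a)) * ∫ t in (0:ℝ)..x, (x - t) ^ (-a) * f t)
        =ᶠ[nhds z] (fun y => ∑' k, g k y) := by
      filter_upwards [isOpen_Ioi.mem_nhds (Set.mem_Ioi.mpr hz)] with y hy
      rw [hF y hy]
    rw [hee.deriv_eq, hderiv.deriv]
  rw [hRLeq]
  -- Step D
  apply tsum_congr; intro k
  rw [hg', hD]; dsimp only
  rcases Nat.eq_zero_or_pos k with hk | hk
  · subst hk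
    simp [Real.Gamma_zero]
  · have hakpos : (0:ℝ) < a * (k:ℝ) := by
      have : (1:ℝ) ≤ (k:ℝ) := by exact_mod_cast hk
      nlinarith
    have hGadd : Real.Gamma (a * (k:ℝ) + 1) = (a * (k:ℝ)) * Real.Gamma (a * (k:ℝ)) :=
      Real.Gamma_add_one hakpos.ne'
    have hGk : 0 < Real.Gamma (a * (k:ℝ)) := Real.Gamma_pos_of_pos hakpos
    rw [hGadd]
    field_simp

theorem stmt3 (a c lam : ℝ) (ha : 0 < a ∧ a < 1) (hc : 0 < c)
    (u : ℝ → ℝ → ℝ)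
    (hu : ∀ z1 z2 : ℝ, 0 < z1 → 0 < z2 →
      u z1 z2 = ∑' k : ℕ, (lam / ((2:ℝ) ^ a * c ^ a)) ^ (2 * k) *
        (z1 * z2) ^ (a * (k : ℝ) + a - 1) / Real.Gamma (a * (k : ℝ) + a) ^ 2)
    (z1 z2 : ℝ) (h1 : 0 < z1) (h2 : 0 < z2) :
    (4 * c ^ 2) ^ a * RL a (fun y1 => RL a (fun y2 => u y1 y2) z2) z1
      = lam ^ 2 * u z1 z2 := by
  obtain ⟨ha0, ha1⟩ := ha
  set q : ℝ := lam / ((2:ℝ) ^ a * c ^ a) with hq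
  have hQ0 : (0:ℝ) ≤ q ^ 2 := sq_nonneg q
  have hbk : ∀ k : ℕ, (0:ℝ) < a * (k:ℝ) + a := by
    intro k; have : (0:ℝ) ≤ (k:ℝ) := Nat.cast_nonneg k; nlinarith
  have hGpos : ∀ k : ℕ, 0 < Real.Gamma (a * (k:ℝ) + a) := fun k => Real.Gamma_pos_of_pos (hbk k)
  have hGaknn : ∀ k : ℕ, 0 ≤ Real.Gamma (a * (k:ℝ)) := by
    intro k
    rcases Nat.eq_zero_or_pos k with hk | hk
    · subst hk; simp [Real.Gamma_zero]
    · have : (0:ℝ) < a * (k:ℝ) := by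
        have : (1:ℝ) ≤ (k:ℝ) := by exact_mod_cast hk
        nlinarith
      exact (Real.Gamma_pos_of_pos this).le
  have hakpos : ∀ k : ℕ, 1 ≤ k → (0:ℝ) < a * (k:ℝ) := by
    intro k hk
    have : (1:ℝ) ≤ (k:ℝ) := by exact_mod_cast hk
    nlinarith
  -- the fundamental constant identity
  have h2a : (0:ℝ) < 2 ^ a := Real.rpow_pos_of_pos (by norm_num) a
  have hca : (0:ℝ) < c ^ a := Real.rpow_pos_of_pos hc a
  have h4c : (0:ℝ) < (4 * c ^ 2) ^ a := Real.rpow_pos_of_pos (by positivity) a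
  have hfour : ((2:ℝ) ^ a * c ^ a) ^ 2 = (4 * c ^ 2) ^ a := by
    have e1 : ((2:ℝ) ^ a * c ^ a) ^ 2 = ((2:ℝ)^a * (2:ℝ)^a) * (c^a * c^a) := by ring
    rw [e1, ← Real.mul_rpow (by norm_num) (by norm_num),
        ← Real.mul_rpow hc.le hc.le, ← Real.mul_rpow (by norm_num) (by positivity)]
    norm_num
    ring_nf
  have hql : (4 * c ^ 2) ^ a * q ^ 2 = lam ^ 2 := by
    rw [hq, div_pow, hfour]
    field_simp
  -- inner coefficients
  set C1 : ℝ → ℕ → ℝ := fun y1 k => (q^2) ^ k * y1 ^ (a * (k:ℝ) + a - 1) / Real.Gamma (a * (k:ℝ) + a) ^ 2 with hC1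
  have hf1 : ∀ y1 : ℝ, 0 < y1 → ∀ t : ℝ, 0 < t →
      u y1 t = ∑' k : ℕ, C1 y1 k * t ^ (a * (k:ℝ) + a - 1) := by
    intro y1 hy1 t ht
    rw [hu y1 t hy1 ht]
    apply tsum_congr; intro k
    rw [hC1]; dsimp only
    rw [pow_mul q 2 k, Real.mul_rpow hy1.le ht.le]
    ring
  have hsum1 : ∀ y1 : ℝ, 0 < y1 → ∀ r : ℝ, 0 < r →
      Summable (fun k : ℕ => |C1 y1 k| * Real.Gamma (a * (k:ℝ) + a) * r ^ k) := by
    intro y1 hy1 r hr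
    have heq : (fun k : ℕ => |C1 y1 k| * Real.Gamma (a * (k:ℝ) + a) * r ^ k)
        = (fun k : ℕ => y1 ^ (a-1) * ((q^2 * y1^a * r) ^ k / Real.Gamma (a * (k:ℝ) + a))) := by
      funext k
      have hC1nn : 0 ≤ C1 y1 k := by
        rw [hC1]; dsimp only
        apply div_nonneg _ (sq_nonneg _)
        exact mul_nonneg (pow_nonneg hQ0 k) (Real.rpow_nonneg hy1.le _)
      rw [abs_of_nonneg hC1nn, hC1]; dsimp only
      have hexp : y1 ^ (a * (k:ℝ) + a - 1) = (y1 ^ a) ^ k * y1 ^ (a - 1) := by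
        rw [show a * (k:ℝ) + a - 1 = a * (k:ℝ) + (a - 1) by ring,
            Real.rpow_add hy1, Real.rpow_mul hy1.le, Real.rpow_natCast]
      rw [hexp, mul_pow, mul_pow]
      field_simp [(hGpos k).ne']
    rw [heq]
    exact Summable.mul_left _ (summable_geom_div_gamma a a (q^2 * y1^a * r) ha0 ha0
      (mul_nonneg (mul_nonneg hQ0 (Real.rpow_nonneg hy1.le a)) hr.le))
  have inner : ∀ y1 : ℝ, 0 < y1 → RL a (fun y2 => u y1 y2) z2
      = ∑' k : ℕ, C1 y1 k * (Real.Gamma (a * (k:ℝ) + a) / Real.Gamma (a * (k:ℝ))) * z2 ^ (a * (k:ℝ) - 1) :=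
    fun y1 hy1 => RL_series a ha0 ha1 (C1 y1) (fun y2 => u y1 y2) (hf1 y1 hy1) (hsum1 y1 hy1) z2 h2
  -- outer coefficients
  set C2 : ℕ → ℝ := fun k => (q^2) ^ k * z2 ^ (a * (k:ℝ) - 1) / (Real.Gamma (a * (k:ℝ) + a) * Real.Gamma (a * (k:ℝ))) with hC2
  have hconv : ∀ y1 : ℝ, 0 < y1 → ∀ k : ℕ,
      C1 y1 k * (Real.Gamma (a * (k:ℝ) + a) / Real.Gamma (a * (k:ℝ))) * z2 ^ (a * (k:ℝ) - 1)
        = C2 k * y1 ^ (a * (k:ℝ) + a - 1) := by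
    intro y1 hy1 k
    rw [hC1, hC2]; dsimp only
    rcases Nat.eq_zero_or_pos k with hk | hk
    · subst hk; simp [Real.Gamma_zero]
    · have hGk : 0 < Real.Gamma (a * (k:ℝ)) := Real.Gamma_pos_of_pos (hakpos k hk)
      field_simp [(hGpos k).ne', hGk.ne']
  have hf2 : ∀ t : ℝ, 0 < t → (fun y1 => RL a (fun y2 => u y1 y2) z2) t
      = ∑' k : ℕ, C2 k * t ^ (a * (k:ℝ) + a - 1) := by
    intro t ht
    dsimp only
    rw [inner t ht]
    exact tsum_congr (fun k => hconv t ht k)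
  have hsum2 : ∀ r : ℝ, 0 < r →
      Summable (fun k : ℕ => |C2 k| * Real.Gamma (a * (k:ℝ) + a) * r ^ k) := by
    intro r hr
    have heq : (fun k : ℕ => |C2 k| * Real.Gamma (a * (k:ℝ) + a) * r ^ k)
        = (fun k : ℕ => (q^2) ^ k * z2 ^ (a * (k:ℝ) - 1) * r ^ k / Real.Gamma (a * (k:ℝ))) := by
      funext k
      have hC2nn : 0 ≤ C2 k := by
        rw [hC2]; dsimp only
        apply div_nonneg _ (mul_nonneg (hGpos k).le (hGaknn k))
        exact mul_nonneg (pow_nonneg hQ0 k) (Real.rpow_nonneg h2.le _)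
      rw [abs_of_nonneg hC2nn, hC2]; dsimp only
      rcases Nat.eq_zero_or_pos k with hk | hk
      · subst hk; simp [Real.Gamma_zero]
      · have hGk : 0 < Real.Gamma (a * (k:ℝ)) := Real.Gamma_pos_of_pos (hakpos k hk)
        field_simp [(hGpos k).ne', hGk.ne']
    rw [heq, ← summable_nat_add_iff 1]
    have heq2 : (fun k : ℕ => (q^2) ^ (k+1) * z2 ^ (a * ((k+1:ℕ):ℝ) - 1) * r ^ (k+1) / Real.Gamma (a * ((k+1:ℕ):ℝ)))
        = (fun k : ℕ => (q^2 * r * z2 ^ (a-1)) * ((q^2 * z2^a * r) ^ k / Real.Gamma (a * (k:ℝ) + a))) := by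
      funext k
      have hc1 : ((k+1:ℕ):ℝ) = (k:ℝ) + 1 := by push_cast; ring
      rw [hc1, show a * ((k:ℝ) + 1) = a * (k:ℝ) + a by ring]
      have hexp : z2 ^ (a * (k:ℝ) + a - 1) = (z2 ^ a) ^ k * z2 ^ (a - 1) := by
        rw [show a * (k:ℝ) + a - 1 = a * (k:ℝ) + (a - 1) by ring,
            Real.rpow_add h2, Real.rpow_mul h2.le, Real.rpow_natCast]
      rw [hexp, mul_pow, mul_pow, pow_succ, pow_succ]
      ring
    rw [heq2]
    exact Summable.mul_left _ (summable_geom_div_gamma a a (q^2 * z2^a * r) ha0 ha0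
      (mul_nonneg (mul_nonneg hQ0 (Real.rpow_nonneg h2.le a)) hr.le))
  have houter : RL a (fun y1 => RL a (fun y2 => u y1 y2) z2) z1
      = ∑' k : ℕ, C2 k * (Real.Gamma (a * (k:ℝ) + a) / Real.Gamma (a * (k:ℝ))) * z1 ^ (a * (k:ℝ) - 1) :=
    RL_series a ha0 ha1 C2 _ hf2 hsum2 z1 h1
  -- final summation identity
  set W : ℕ → ℝ := fun k => q ^ (2*k) * (z1*z2) ^ (a * (k:ℝ) + a - 1) / Real.Gamma (a * (k:ℝ) + a) ^ 2 with hW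
  have huW : u z1 z2 = ∑' k, W k := hu z1 z2 h1 h2
  have hWsum : Summable W := by
    apply Summable.of_nonneg_of_le (fun k => ?_) (fun k => ?_)
      ((summable_geom_div_gamma a a (q^2 * (z1*z2)^a) ha0 ha0
        (mul_nonneg hQ0 (Real.rpow_nonneg (by positivity) a))).mul_left
        (6 * (z1*z2) ^ (a-1)))
    · rw [hW]; dsimp only
      apply div_nonneg _ (sq_nonneg _)
      rw [pow_mul]
      exact mul_nonneg (pow_nonneg hQ0 k) (Real.rpow_nonneg (by positivity) _)
    · rw [hW]; dsimp only
      have h6 : 1 / Real.Gamma (a * (k:ℝ) + a) ≤ 6 := inv_gamma_le _ (hbk k)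
      have hexp : (z1*z2) ^ (a * (k:ℝ) + a - 1) = ((z1*z2) ^ a) ^ k * (z1*z2) ^ (a - 1) := by
        rw [show a * (k:ℝ) + a - 1 = a * (k:ℝ) + (a - 1) by ring,
            Real.rpow_add (by positivity), Real.rpow_mul (by positivity), Real.rpow_natCast]
      rw [pow_mul, hexp, mul_pow]
      have hnn : (0:ℝ) ≤ (q^2)^k * (((z1*z2)^a)^k * (z1*z2)^(a-1)) :=
        mul_nonneg (pow_nonneg hQ0 k) (mul_nonneg (pow_nonneg (Real.rpow_nonneg (by positivity) a) k) (Real.rpow_nonneg (by positivity) _))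
      calc (q^2)^k * (((z1*z2)^a)^k * (z1*z2)^(a-1)) / Real.Gamma (a * (k:ℝ) + a) ^ 2
          = ((q^2)^k * (((z1*z2)^a)^k * (z1*z2)^(a-1)) / Real.Gamma (a * (k:ℝ) + a)) * (1 / Real.Gamma (a * (k:ℝ) + a)) := by
            ring
          _ ≤ ((q^2)^k * (((z1*z2)^a)^k * (z1*z2)^(a-1)) / Real.Gamma (a * (k:ℝ) + a)) * 6 := by
            apply mul_le_mul_of_nonneg_left h6 (div_nonneg hnn (hGpos k).le)
          _ = 6 * (z1*z2)^(a-1) * ((q^2) ^ k * ((z1*z2)^a) ^ k / Real.Gamma (a * (k:ℝ) + a)) := by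
            ring
  set T : ℕ → ℝ := fun k => (4 * c ^ 2) ^ a *
      (C2 k * (Real.Gamma (a * (k:ℝ) + a) / Real.Gamma (a * (k:ℝ))) * z1 ^ (a * (k:ℝ) - 1)) with hT
  have hT0 : T 0 = 0 := by
    rw [hT, hC2]; simp [Real.Gamma_zero]
  have hTs : ∀ k : ℕ, T (k+1) = lam ^ 2 * W k := by
    intro k
    rw [hT, hC2, hW]; dsimp only
    have hc1 : ((k+1:ℕ):ℝ) = (k:ℝ) + 1 := by push_cast; ring
    rw [hc1, show a * ((k:ℝ) + 1) = a * (k:ℝ) + a by ring]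
    have step : (4 * c ^ 2) ^ a *
        ((q^2) ^ (k+1) * z2 ^ (a * (k:ℝ) + a - 1) / (Real.Gamma (a * (k:ℝ) + a + a) * Real.Gamma (a * (k:ℝ) + a)) *
          (Real.Gamma (a * (k:ℝ) + a + a) / Real.Gamma (a * (k:ℝ) + a)) * z1 ^ (a * (k:ℝ) + a - 1))
        = ((4 * c ^ 2) ^ a * q ^ 2) *
          ((q^2) ^ k * (z1 ^ (a * (k:ℝ) + a - 1) * z2 ^ (a * (k:ℝ) + a - 1)) / Real.Gamma (a * (k:ℝ) + a) ^ 2) := by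
      have hGkaa : 0 < Real.Gamma (a * (k:ℝ) + a + a) := Real.Gamma_pos_of_pos (by nlinarith [hbk k])
      rw [pow_succ]
      field_simp [(hGpos k).ne', hGkaa.ne']
      ring
    rw [step, hql, pow_mul, Real.mul_rpow h1.le h2.le]
  have hsumT : Summable T := by
    rw [← summable_nat_add_iff 1]
    have : (fun k : ℕ => T (k+1)) = (fun k : ℕ => lam ^ 2 * W k) := funext hTs
    rw [this]
    exact hWsum.mul_left _
  rw [houter, ← tsum_mul_left]
  have hfin : ∑' k, (4 * c ^ 2) ^ a *
      (C2 k * (Real.Gamma (a * (k:ℝ) + a) / Real.Gamma (a * (k:ℝ))) * z1 ^ (a * (k:ℝ) - 1)) = ∑' k, T k := rfl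
  rw [hfin]
  calc ∑' k, T k = T 0 + ∑' k, T (k+1) := hsumT.tsum_eq_zero_add
    _ = ∑' k, (lam ^ 2 * W k) := by
        rw [hT0, zero_add]; exact tsum_congr hTs
    _ = lam ^ 2 * ∑' k, W k := tsum_mul_left
    _ = lam ^ 2 * u z1 z2 := by rw [huW]
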